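/- Merging robust fair clusters preserves robust fairness: if clusters C_1,...,C_t (pairwise disjoint, each nonempty) each satisfy the robust fairness bounds (|C_{i,h}| + m_h^+)/|C_i| ≤ u_h and (|C_{i,h}| - m_h^-)/|C_i| ≥ l_h for every color h, then their union C = C_1 ∪ ... ∪ C_t satisfies (|C_h| + m_h^+)/|C| ≤ u_h and (|C_h| - m_h^-)/|C| ≥ l_h, where C_h = C_{1,h} ∪ ... ∪ C_{t,h}. -/
import Mathlib


theorem merge_preserves_robust_fairness {α H : Type*} [DecidableEq α] [Fintype H]
    (t : ℕ) (ht : 1 ≤ t)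
    (C : Fin t → Finset α)
    (hne : ∀ i, (C i).Nonempty)
    (hdisj : ∀ i j : Fin t, i ≠ j → Disjoint (C i) (C j))
    (Ch : Fin t → H → Finset α)
    (hpart_disj : ∀ i, ∀ g h : H, g ≠ h → Disjoint (Ch i g) (Ch i h))
    (hpart_union : ∀ i, Finset.univ.biUnion (Ch i) = C i)
    (l u : H → ℝ) (mplus mminus : H → ℕ)
    (hub : ∀ i, ∀ h : H, ((Ch i h).card + (mplus h : ℝ)) / (C i).card ≤ u h)
    (hlb : ∀ i, ∀ h : H, l h ≤ ((Ch i h).card - (mminus h : ℝ)) / (C i).card) :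
    (∀ h : H,
      (((Finset.univ.biUnion fun i => Ch i h).card : ℝ) + (mplus h : ℝ)) /
        ((Finset.univ.biUnion C).card : ℝ) ≤ u h) ∧
    (∀ h : H,
      l h ≤ (((Finset.univ.biUnion fun i => Ch i h).card : ℝ) - (mminus h : ℝ)) /
        ((Finset.univ.biUnion C).card : ℝ)) := by
  have hsub : ∀ i h, Ch i h ⊆ C i := fun i h => by
    rw [← hpart_union i]; exact Finset.subset_biUnion_of_mem _ (Finset.mem_univ h)
  have hcard : ((Finset.univ.biUnion C).card : ℝ) = ∑ i, ((C i).card : ℝ) := by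
    rw [Finset.card_biUnion (fun i _ j _ hij => hdisj i j hij)]; push_cast; ring
  have hcardh : ∀ h, ((Finset.univ.biUnion fun i => Ch i h).card : ℝ)
      = ∑ i, ((Ch i h).card : ℝ) := by
    intro h
    rw [Finset.card_biUnion (fun i _ j _ hij => (hdisj i j hij).mono (hsub i h) (hsub j h))]
    push_cast; ring
  have hpos : ∀ i, (0:ℝ) < (C i).card := fun i => by
    exact_mod_cast Finset.card_pos.mpr (hne i)
  have hCpos : (0:ℝ) < (Finset.univ.biUnion C).card := by
    rw [hcard]
    exact lt_of_lt_of_le (hpos ⟨0, ht⟩)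
      (Finset.single_le_sum (fun i _ => (hpos i).le) (Finset.mem_univ _))
  have ht' : (1:ℝ) ≤ (t:ℝ) := by exact_mod_cast ht
  constructor
  · intro h
    rw [div_le_iff₀ hCpos, hcardh, hcard, Finset.mul_sum]
    have h2 : ∑ i, (((Ch i h).card : ℝ) + mplus h) ≤ ∑ i, u h * (C i).card :=
      Finset.sum_le_sum (fun i _ => (div_le_iff₀ (hpos i)).mp (hub i h))
    have h3 : ∑ i, (((Ch i h).card : ℝ) + mplus h)
        = (∑ i, ((Ch i h).card : ℝ)) + t * mplus h := by
      rw [Finset.sum_add_distrib, Finset.sum_const, Finset.card_univ, Fintype.card_fin,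
        nsmul_eq_mul]
    have hm : (mplus h : ℝ) ≤ t * mplus h := by
      nlinarith [Nat.cast_nonneg (α := ℝ) (mplus h)]
    linarith
  · intro h
    rw [le_div_iff₀ hCpos, hcardh, hcard, Finset.mul_sum]
    have h2 : ∑ i, l h * (C i).card ≤ ∑ i, (((Ch i h).card : ℝ) - mminus h) :=
      Finset.sum_le_sum (fun i _ => (le_div_iff₀ (hpos i)).mp (hlb i h))
    have h3 : ∑ i, (((Ch i h).card : ℝ) - mminus h)
        = (∑ i, ((Ch i h).card : ℝ)) - t * mminus h := by
      rw [Finset.sum_sub_distrib, Finset.sum_const, Finset.card_univ, Fintype.card_fin,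
        nsmul_eq_mul]
    have hm : (mminus h : ℝ) ≤ t * mminus h := by
      nlinarith [Nat.cast_nonneg (α := ℝ) (mminus h)]
    linarith
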